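/- arXiv:2301.09742 — 2 statements merged into one kernel-verified Lean document; each statement's English description precedes it below -/
import Mathlib

section
/- Let M_a = {x ∈ ℝ² : 1 ≤ ‖x‖ ≤ 2} (an annulus) and M_b = {x ∈ ℝ² : ‖x‖ ≤ 1/2} (a cluster inside the hole of the annulus). For every homeomorphism f : ℝ² → ℝ², there do not exist a nonzero vector v ∈ ℝ² and a real number c such that ⟪v, y⟫ > c for all y ∈ f(M_a) and ⟪v, y⟫ < c for all y ∈ f(M_b). In other words, no hidden-layer transformation of ℝ² that is a homeomorphism (as is the case for smooth activation layers of width 2) can make the two classes linearly separable. -/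
open scoped RealInnerProductSpace

/-- No homeomorphism of ℝ² can make the annulus `M_a = {1 ≤ ‖x‖ ≤ 2}` and the inner
cluster `M_b = {‖x‖ ≤ 1/2}` linearly separable. -/
theorem no_linear_separation_after_homeomorphism
    (Ma Mb : Set (EuclideanSpace ℝ (Fin 2)))
    (hMa : Ma = {x | 1 ≤ ‖x‖ ∧ ‖x‖ ≤ 2})
    (hMb : Mb = {x | ‖x‖ ≤ 1 / 2})
    (f : EuclideanSpace ℝ (Fin 2) ≃ₜ EuclideanSpace ℝ (Fin 2)) :
    ¬ ∃ (v : EuclideanSpace ℝ (Fin 2)) (c : ℝ), v ≠ 0 ∧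
      (∀ y ∈ f '' Ma, ⟪v, y⟫ > c) ∧ (∀ y ∈ f '' Mb, ⟪v, y⟫ < c) := by
  rintro ⟨v, c, hv, ha, hb⟩
  have hvn : (0:ℝ) < ‖v‖ := norm_pos_iff.mpr hv
  have h0b : (0 : EuclideanSpace ℝ (Fin 2)) ∈ Mb := by simp [hMb]
  have hf0 : ⟪v, f 0⟫ < c := hb _ ⟨0, h0b, rfl⟩
  -- bound the image of the closed unit ball
  obtain ⟨R, hR⟩ := isBounded_iff_forall_norm_le.mp
    (((isCompact_closedBall (0 : EuclideanSpace ℝ (Fin 2)) 1).image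
      f.continuous).isBounded)
  have hf0R : ‖f 0‖ ≤ R := hR _ ⟨0, by simp, rfl⟩
  have hR0 : 0 ≤ R := le_trans (norm_nonneg _) hf0R
  set t : ℝ := (R + ‖f 0‖ + 1) / ‖v‖ with ht
  have ht0 : 0 ≤ t := by positivity
  -- the pulled-back path
  set g : ℝ → EuclideanSpace ℝ (Fin 2) :=
    fun s => f.symm (f 0 - (s * t) • v) with hg
  have hgc : Continuous g :=
    f.symm.continuous.comp (continuous_const.sub
      (((continuous_id.mul continuous_const)).smul continuous_const))
  have hg0 : g 0 = 0 := by simp [hg]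
  -- the endpoint is outside the closed unit ball
  have hg1 : 1 < ‖g 1‖ := by
    by_contra h
    push_neg at h
    have hmem : g 1 ∈ Metric.closedBall (0 : EuclideanSpace ℝ (Fin 2)) 1 :=
      mem_closedBall_zero_iff.mpr h
    have : ‖f (g 1)‖ ≤ R := hR _ ⟨g 1, hmem, rfl⟩
    have hfg1 : f (g 1) = f 0 - (1 * t) • v := by simp [hg]
    rw [hfg1] at this
    have hlow : t * ‖v‖ - ‖f 0‖ ≤ ‖f 0 - (1 * t) • v‖ := by
      calc t * ‖v‖ - ‖f 0‖ = ‖(1 * t) • v‖ - ‖f 0‖ := by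
            rw [norm_smul]; simp [abs_of_nonneg ht0, mul_comm]
        _ ≤ ‖(1 * t) • v - f 0‖ := norm_sub_norm_le _ _
        _ = ‖f 0 - (1 * t) • v‖ := norm_sub_rev _ _
    have htv : t * ‖v‖ = R + ‖f 0‖ + 1 := div_mul_cancel₀ _ (ne_of_gt hvn)
    nlinarith [norm_nonneg (f 0)]
  -- IVT: the path crosses the unit circle
  have hIVT := intermediate_value_Icc (by norm_num : (0:ℝ) ≤ 1)
    ((hgc.norm).continuousOn (s := Set.Icc 0 1))
  have h1mem : (1:ℝ) ∈ Set.Icc ‖g 0‖ ‖g 1‖ := by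
    constructor
    · rw [hg0]; simp
    · exact le_of_lt hg1
  obtain ⟨s, hs, hns'⟩ := hIVT h1mem
  have hns : ‖g s‖ = 1 := hns'
  have hsMa : g s ∈ Ma := by
    rw [hMa]
    exact ⟨le_of_eq hns.symm, by rw [hns]; norm_num⟩
  have hgt : c < ⟪v, f (g s)⟫ := ha _ ⟨g s, hsMa, rfl⟩
  have hfg : f (g s) = f 0 - (s * t) • v := by simp [hg]
  rw [hfg, inner_sub_right, real_inner_smul_right] at hgt
  have hst : 0 ≤ s * t := mul_nonneg hs.1 ht0
  have hvv : 0 ≤ ⟪v, v⟫ := real_inner_self_nonneg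
  nlinarith
end

section
/- Let M_a = {x ∈ ℝ² : 1 ≤ ‖x‖ ≤ 2} and M_b = {x ∈ ℝ² : ‖x‖ ≤ 1/2}. There exist a width k, an affine map A : ℝ² → ℝᵏ, a weight vector w ∈ ℝᵏ, and a threshold c ∈ ℝ such that the one-hidden-layer ReLU network g(x) = ⟪w, ReLU(A x)⟫ (with ReLU(t) = max(t,0) applied coordinatewise) satisfies g(x) > c for all x ∈ M_a and g(y) < c for all y ∈ M_b. Thus, unlike networks whose layers are homeomorphisms, a ReLU network can produce a linear boundary separating the annulus from the cluster inside its hole. -/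
open scoped RealInnerProductSpace

noncomputable def reluL : EuclideanSpace ℝ (Fin 2) →ₗ[ℝ] EuclideanSpace ℝ (Fin 4) where
  toFun x := WithLp.toLp 2 ![x 0, -(x 0), x 1, -(x 1)]
  map_add' x y := by
    ext i
    fin_cases i <;> simp [PiLp.add_apply] <;> ring
  map_smul' c x := by
    ext i
    fin_cases i <;> simp [PiLp.smul_apply, smul_eq_mul] <;> ring

lemma max_add_max_neg (a : ℝ) : max a 0 + max (-a) 0 = |a| := by
  rcases le_or_gt 0 a with h | h
  · rw [max_eq_left h, max_eq_right (by linarith), abs_of_nonneg h]; ring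
  · rw [max_eq_right h.le, max_eq_left (by linarith), abs_of_neg h]; ring

noncomputable def w4 : EuclideanSpace ℝ (Fin 4) := WithLp.toLp 2 (fun _ => 1)

lemma reluL_inner (x : EuclideanSpace ℝ (Fin 2)) (v : EuclideanSpace ℝ (Fin 4))
    (hv : ∀ i, v i = max (reluL.toAffineMap x i) 0) :
    ⟪w4, v⟫ = |x 0| + |x 1| := by
  rw [PiLp.inner_apply, Fin.sum_univ_four, hv 0, hv 1, hv 2, hv 3]
  show ⟪(1:ℝ), max (x 0) 0⟫ + ⟪(1:ℝ), max (-(x 0)) 0⟫ + ⟪(1:ℝ), max (x 1) 0⟫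
      + ⟪(1:ℝ), max (-(x 1)) 0⟫ = |x 0| + |x 1|
  simp only [Real.inner_apply, one_mul]
  have := max_add_max_neg (x 0)
  have := max_add_max_neg (x 1)
  linarith

/-- A one-hidden-layer ReLU network `g x = ⟪w, ReLU (A x)⟫` (coordinatewise ReLU, `A`
affine) can separate the annulus `M_a = {1 ≤ ‖x‖ ≤ 2}` from the inner cluster
`M_b = {‖x‖ ≤ 1/2}` by a threshold. -/
theorem relu_network_separates_annulus
    (Ma Mb : Set (EuclideanSpace ℝ (Fin 2)))
    (hMa : Ma = {x | 1 ≤ ‖x‖ ∧ ‖x‖ ≤ 2})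
    (hMb : Mb = {x | ‖x‖ ≤ 1 / 2}) :
    ∃ (k : ℕ) (A : EuclideanSpace ℝ (Fin 2) →ᵃ[ℝ] EuclideanSpace ℝ (Fin k))
      (w : EuclideanSpace ℝ (Fin k)) (c : ℝ),
      (∀ x ∈ Ma, ⟪w, (WithLp.toLp 2 (fun i => max (A x i) 0) : EuclideanSpace ℝ (Fin k))⟫ > c) ∧
      (∀ y ∈ Mb, ⟪w, (WithLp.toLp 2 (fun i => max (A y i) 0) : EuclideanSpace ℝ (Fin k))⟫ < c) := by
  subst hMa hMb
  refine ⟨4, reluL.toAffineMap, w4, 9/10, ?_, ?_⟩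
  all_goals
    intro x hx
    have hnorm : ‖x‖ = Real.sqrt ((x 0) ^ 2 + (x 1) ^ 2) := by
      rw [EuclideanSpace.norm_eq, Fin.sum_univ_two]
      simp [Real.norm_eq_abs, sq_abs]
    rw [reluL_inner x _ (fun i => rfl)]
  · -- annulus case
    obtain ⟨h1, _⟩ := hx
    rw [hnorm] at h1
    have hs : (1:ℝ) ≤ (x 0) ^ 2 + (x 1) ^ 2 := by
      nlinarith [Real.sq_sqrt (by positivity : (0:ℝ) ≤ (x 0) ^ 2 + (x 1) ^ 2),
        Real.sqrt_nonneg ((x 0) ^ 2 + (x 1) ^ 2)]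
    nlinarith [abs_nonneg (x 0), abs_nonneg (x 1), sq_abs (x 0), sq_abs (x 1),
      mul_nonneg (abs_nonneg (x 0)) (abs_nonneg (x 1))]
  · -- ball case
    have h1 : ‖x‖ ≤ 1/2 := hx
    rw [hnorm] at h1
    have hs : (x 0) ^ 2 + (x 1) ^ 2 ≤ 1/4 := by
      nlinarith [Real.sq_sqrt (by positivity : (0:ℝ) ≤ (x 0) ^ 2 + (x 1) ^ 2),
        Real.sqrt_nonneg ((x 0) ^ 2 + (x 1) ^ 2)]
    nlinarith [abs_nonneg (x 0), abs_nonneg (x 1), sq_abs (x 0), sq_abs (x 1),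
      sq_nonneg (|x 0| - |x 1|)]
end
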